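/- arXiv:2003.06622 — 5 statements merged into one kernel-verified Lean document; each statement's English description precedes it below -/
import Mathlib

section
/- Let S_1, S_2 be nonempty finite index sets with |S_1|, |S_2| ≤ m, all a_i > 0, δ = ε·w/(3m) with 0 < w ≤ min(∑_{i∈S_1} a_i, ∑_{i∈S_2} a_i) and ε ∈ (0,1), and let a'_i = ⌊a_i/δ⌋. Then (∑_{i∈S_1} a_i)/(∑_{j∈S_2} a_j) ≤ (∑_{i∈S_1} a'_i)/(∑_{j∈S_2} a'_j) + ε/3, provided ∑_{j∈S_2} a'_j > 0. -/
theorem ratio_le_scaled_ratio_add (n m : ℕ) (a : Fin n → ℝ) (ha : ∀ i, 0 < a i)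
    (S₁ S₂ : Finset (Fin n)) (h1 : S₁.Nonempty) (h2 : S₂.Nonempty)
    (hc1 : S₁.card ≤ m) (hc2 : S₂.card ≤ m)
    (ε w : ℝ) (hε : 0 < ε) (hε1 : ε < 1)
    (hw : 0 < w) (hw1 : w ≤ ∑ i ∈ S₁, a i) (hw2 : w ≤ ∑ i ∈ S₂, a i)
    (δ : ℝ) (hδ : δ = ε * w / (3 * m))
    (hpos : 0 < ∑ j ∈ S₂, (⌊a j / δ⌋ : ℝ)) :
    (∑ i ∈ S₁, a i) / (∑ j ∈ S₂, a j) ≤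
      (∑ i ∈ S₁, (⌊a i / δ⌋ : ℝ)) / (∑ j ∈ S₂, (⌊a j / δ⌋ : ℝ)) + ε / 3 := by
  set A := ∑ i ∈ S₁, a i with hA
  set B := ∑ j ∈ S₂, a j with hB
  set A' := ∑ i ∈ S₁, (⌊a i / δ⌋ : ℝ) with hA'
  set B' := ∑ j ∈ S₂, (⌊a j / δ⌋ : ℝ) with hB'
  have hm1 : 1 ≤ m := le_trans (Finset.card_pos.mpr h1) hc1
  have hmR : (1:ℝ) ≤ m := by exact_mod_cast hm1
  have hmpos : (0:ℝ) < m := lt_of_lt_of_le one_pos hmR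
  have hδpos : 0 < δ := by
    rw [hδ]
    positivity
  have hBpos : 0 < B := lt_of_lt_of_le hw hw2
  have hAlb : A / δ - m ≤ A' := by
    have h1' : A / δ - S₁.card ≤ A' := by
      have : ∑ i ∈ S₁, (a i / δ - 1) ≤ A' := by
        apply Finset.sum_le_sum
        intro i _
        have := Int.sub_one_lt_floor (a i / δ)
        linarith
      rw [Finset.sum_sub_distrib, Finset.sum_const, nsmul_eq_mul, mul_one,
        ← Finset.sum_div] at this
      exact this
    have : (S₁.card : ℝ) ≤ m := by exact_mod_cast hc1
    linarith
  have hBub : B' ≤ B / δ := by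
    rw [hB, Finset.sum_div]
    apply Finset.sum_le_sum
    intro j _
    exact Int.floor_le _
  have hmδ : (m : ℝ) * δ = ε * w / 3 := by
    rw [hδ]; field_simp
  have step2 : (A / δ - m) / (B / δ) ≤ A' / B' := by
    rcases le_or_gt (A / δ - m) 0 with h | h
    · have : (A / δ - m) / (B / δ) ≤ 0 :=
        div_nonpos_of_nonpos_of_nonneg h (le_of_lt (div_pos hBpos hδpos))
      have hA'nn : 0 ≤ A' := by
        apply Finset.sum_nonneg
        intro i _
        have : (0:ℤ) ≤ ⌊a i / δ⌋ := Int.floor_nonneg.mpr (le_of_lt (div_pos (ha i) hδpos))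
        exact_mod_cast this
      exact le_trans this (div_nonneg hA'nn (le_of_lt hpos))
    · exact div_le_div₀ (le_trans (le_of_lt h) hAlb |>.trans_eq rfl |> fun _ => by
        apply Finset.sum_nonneg
        intro i _
        have : (0:ℤ) ≤ ⌊a i / δ⌋ := Int.floor_nonneg.mpr (le_of_lt (div_pos (ha i) hδpos))
        exact_mod_cast this) hAlb hpos hBub
  have step1 : A / B - ε / 3 ≤ (A / δ - m) / (B / δ) := by
    have heq : (A / δ - m) / (B / δ) = A / B - (m * δ) / B := by
      field_simp
    rw [heq, hmδ]
    have : ε * w / 3 / B ≤ ε / 3 := by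
      rw [div_le_iff₀ hBpos]; nlinarith
    linarith
  linarith [le_trans step1 step2]
end

section
/- Under the scaling δ = ε·w/(3m) with ε ∈ (0,1), 0 < w ≤ min(∑_{i∈S_1} a_i, ∑_{i∈S_2} a_i), |S_1|, |S_2| ≤ m, and a'_i = ⌊a_i/δ⌋, the scaled ratio satisfies (∑_{i∈S_1} a'_i)/(∑_{j∈S_2} a'_j) ≤ (1 + ε/2)·(∑_{i∈S_1} a_i)/(∑_{j∈S_2} a_j), provided ∑_{j∈S_2} a'_j > 0. -/
theorem scaled_ratio_le_ratio_mul (n m : ℕ) (a : Fin n → ℝ) (ha : ∀ i, 0 < a i)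
    (S₁ S₂ : Finset (Fin n)) (h1 : S₁.Nonempty) (h2 : S₂.Nonempty)
    (hc1 : S₁.card ≤ m) (hc2 : S₂.card ≤ m)
    (ε w : ℝ) (hε : 0 < ε) (hε1 : ε < 1)
    (hw : 0 < w) (hw1 : w ≤ ∑ i ∈ S₁, a i) (hw2 : w ≤ ∑ i ∈ S₂, a i)
    (δ : ℝ) (hδ : δ = ε * w / (3 * m))
    (hpos : 0 < ∑ j ∈ S₂, (⌊a j / δ⌋ : ℝ)) :
    (∑ i ∈ S₁, (⌊a i / δ⌋ : ℝ)) / (∑ j ∈ S₂, (⌊a j / δ⌋ : ℝ)) ≤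
      (1 + ε / 2) * ((∑ i ∈ S₁, a i) / (∑ j ∈ S₂, a j)) := by
  have hm : 1 ≤ m := le_trans (Finset.card_pos.mpr h1) hc1
  have hm' : (0:ℝ) < m := by exact_mod_cast Nat.lt_of_lt_of_le Nat.zero_lt_one hm
  have hδpos : 0 < δ := by
    rw [hδ]; positivity
  set A := ∑ i ∈ S₁, a i with hA
  set B := ∑ j ∈ S₂, a j with hB
  have hApos : 0 < A := lt_of_lt_of_le hw hw1
  have hBpos : 0 < B := lt_of_lt_of_le hw hw2
  have hmδ : (m:ℝ) * δ = ε * w / 3 := by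
    rw [hδ]; field_simp
  have hnum : (∑ i ∈ S₁, (⌊a i / δ⌋ : ℝ)) ≤ A / δ := by
    rw [hA, Finset.sum_div]
    exact Finset.sum_le_sum fun i _ => Int.floor_le _
  have hden : B * (1 - ε/3) / δ ≤ ∑ j ∈ S₂, (⌊a j / δ⌋ : ℝ) := by
    have h1' : ∑ j ∈ S₂, (a j / δ - 1) ≤ ∑ j ∈ S₂, (⌊a j / δ⌋ : ℝ) :=
      Finset.sum_le_sum fun j _ => by
        have := Int.sub_one_lt_floor (a j / δ); linarith
    have h2' : ∑ j ∈ S₂, (a j / δ - 1) = B / δ - S₂.card := by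
      rw [Finset.sum_sub_distrib, Finset.sum_div, Finset.sum_const, nsmul_eq_mul,
        mul_one]
    have hcard : (S₂.card : ℝ) ≤ m := by exact_mod_cast hc2
    have : B * (1 - ε/3) / δ ≤ B / δ - m := by
      rw [div_sub' (ne_of_gt hδpos), div_le_div_iff₀ hδpos hδpos]
      have h3 : (m:ℝ) * δ ≤ ε * B / 3 := by
        rw [hmδ]; nlinarith
      nlinarith
    linarith
  have hLpos : 0 < B * (1 - ε/3) / δ := by
    apply div_pos _ hδpos
    nlinarith
  have hnumnn : 0 ≤ A / δ := le_of_lt (div_pos hApos hδpos)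
  calc (∑ i ∈ S₁, (⌊a i / δ⌋ : ℝ)) / (∑ j ∈ S₂, (⌊a j / δ⌋ : ℝ))
      ≤ (A / δ) / (B * (1 - ε/3) / δ) := div_le_div₀ hnumnn hnum hLpos hden
    _ = A / (B * (1 - ε/3)) := by
        rw [div_div_div_cancel_right₀ (ne_of_gt hδpos)]
    _ ≤ (1 + ε / 2) * (A / B) := by
        rw [div_le_iff₀ (by nlinarith), mul_comm (1 + ε/2), mul_assoc, div_mul_eq_mul_div,
          le_div_iff₀ hBpos]
        nlinarith [mul_nonneg hApos.le (mul_nonneg hBpos.le (mul_nonneg hε.le (sub_nonneg.mpr hε1.le)))]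
end

section
/- Theorem (approximation preservation under scaling): Let A = {a_1,...,a_n} be positive reals, ε ∈ (0,1), and let S_1Opt, S_2Opt, S_1, S_2 ⊆ {1,...,n} be nonempty sets. Suppose w, m, δ satisfy 0 < w ≤ min(∑_{i∈S_1Opt} a_i, ∑_{i∈S_2Opt} a_i), w ≤ min(∑_{i∈S_1} a_i, ∑_{i∈S_2} a_i), m ≥ max(|S_1Opt|, |S_2Opt|, |S_1|, |S_2|), m ≤ n, and δ = ε·w/(3m). Define a'_i = ⌊a_i/δ⌋ and MR(T_1,T_2,B) = max of the two ratios (∑_{i∈T_1} b_i)/(∑_{j∈T_2} b_j) and its reciprocal. If 1 ≤ MR(S_1,S_2,A') ≤ MR(S_1Opt,S_2Opt,A'), then 1 ≤ MR(S_1,S_2,A) ≤ (1+ε)·MR(S_1Opt,S_2Opt,A). -/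
/-- Max ratio of two subsets with respect to weights `b`. -/
noncomputable def MR2 {n : ℕ} (b : Fin n → ℝ) (T₁ T₂ : Finset (Fin n)) : ℝ :=
  max ((∑ i ∈ T₁, b i) / (∑ j ∈ T₂, b j)) ((∑ j ∈ T₂, b j) / (∑ i ∈ T₁, b i))

lemma sum_floor_bounds {n : ℕ} (a : Fin n → ℝ) (δ : ℝ) (hδ : 0 < δ) (T : Finset (Fin n)) :
    (∑ i ∈ T, a i) - T.card * δ ≤ δ * ∑ i ∈ T, (⌊a i / δ⌋ : ℝ) ∧
    δ * ∑ i ∈ T, (⌊a i / δ⌋ : ℝ) ≤ ∑ i ∈ T, a i := by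
  constructor
  · have h : ∀ i ∈ T, a i - δ ≤ δ * (⌊a i / δ⌋ : ℝ) := by
      intro i _
      have h1 := Int.sub_one_lt_floor (a i / δ)
      have h2 : δ * (a i / δ - 1) ≤ δ * (⌊a i / δ⌋ : ℝ) :=
        mul_le_mul_of_nonneg_left (le_of_lt h1) hδ.le
      have h3 : δ * (a i / δ - 1) = a i - δ := by
        field_simp
      linarith
    have := Finset.sum_le_sum h
    rw [Finset.sum_sub_distrib, Finset.sum_const, nsmul_eq_mul, ← Finset.mul_sum] at this
    exact this
  · have h : ∀ i ∈ T, δ * (⌊a i / δ⌋ : ℝ) ≤ a i := by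
      intro i _
      have h1 := Int.floor_le (a i / δ)
      have h2 : δ * (⌊a i / δ⌋ : ℝ) ≤ δ * (a i / δ) :=
        mul_le_mul_of_nonneg_left h1 hδ.le
      have h3 : δ * (a i / δ) = a i := by field_simp
      linarith
    have := Finset.sum_le_sum h
    rw [← Finset.mul_sum] at this
    exact this

lemma inner_bound (ε w X Y X' Y' P Q P' Q' : ℝ)
    (hε : 0 < ε) (hε1 : ε < 1) (hw : 0 < w)
    (hY : w ≤ Y) (hP : w ≤ P) (hQ : w ≤ Q)
    (hXu : X ≤ X' + ε * w / 3)
    (hY'u : Y' ≤ Y)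
    (hP'u : P' ≤ P)
    (hQ'l : Q - ε * w / 3 ≤ Q')
    (hX'0 : 0 ≤ X') (hY'0 : 0 < Y') (hQ'0 : 0 < Q') (hP'0 : 0 ≤ P')
    (h : X' / Y' ≤ P' / Q') :
    X / Y ≤ (1 + ε / 2) * (P / Q) + ε / 2 := by
  have hY0 : 0 < Y := lt_of_lt_of_le hw hY
  have hQ0 : 0 < Q := lt_of_lt_of_le hw hQ
  have hP0 : 0 < P := lt_of_lt_of_le hw hP
  -- product form of h
  have A3 : X' * Q' ≤ P' * Y' := by
    rw [div_le_div_iff₀ hY'0 hQ'0] at h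
    exact h
  have A4 : P' * Y' ≤ P * Y := mul_le_mul hP'u hY'u hY'0.le hP0.le
  have hQ'l2 : 2 / 3 * w ≤ Q' := by nlinarith
  have h2w : 2 * w * X' ≤ 3 * (P * Y) := by
    have := mul_le_mul_of_nonneg_left hQ'l2 hX'0
    nlinarith
  have A5 : ε * (2 * w * X') ≤ ε * (3 * (P * Y)) :=
    mul_le_mul_of_nonneg_left h2w hε.le
  have A1 : X * Q ≤ (X' + ε * w / 3) * Q :=
    mul_le_mul_of_nonneg_right hXu hQ0.le
  have A2 : X' * (Q - Q') ≤ X' * (ε * w / 3) :=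
    mul_le_mul_of_nonneg_left (by linarith) hX'0
  have A6 : (ε / 3 * Q) * w ≤ (ε / 3 * Q) * Y :=
    mul_le_mul_of_nonneg_left hY (by positivity)
  have A7 : 0 ≤ ε * (Q * Y) := by positivity
  have key : X * Q ≤ ((1 + ε / 2) * P + ε / 2 * Q) * Y := by nlinarith
  have : X / Y ≤ ((1 + ε / 2) * P + ε / 2 * Q) / Q := by
    rw [div_le_div_iff₀ hY0 hQ0]
    exact key
  have heq : ((1 + ε / 2) * P + ε / 2 * Q) / Q = (1 + ε / 2) * (P / Q) + ε / 2 := by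
    field_simp
  linarith [heq ▸ this]

lemma key_lemma (ε w X Y X' Y' P Q P' Q' : ℝ)
    (hε : 0 < ε) (hε1 : ε < 1) (hw : 0 < w)
    (hX : w ≤ X) (hY : w ≤ Y) (hP : w ≤ P) (hQ : w ≤ Q)
    (hX'l : X - ε * w / 3 ≤ X') (hX'u : X' ≤ X)
    (hY'l : Y - ε * w / 3 ≤ Y') (hY'u : Y' ≤ Y)
    (hP'l : P - ε * w / 3 ≤ P') (hP'u : P' ≤ P)
    (hQ'l : Q - ε * w / 3 ≤ Q') (hQ'u : Q' ≤ Q)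
    (h : X' / Y' ≤ max (P' / Q') (Q' / P')) :
    X / Y ≤ (1 + ε) * max (P / Q) (Q / P) := by
  have hP0 : 0 < P := lt_of_lt_of_le hw hP
  have hQ0 : 0 < Q := lt_of_lt_of_le hw hQ
  have hX'0 : 0 < X' := by nlinarith
  have hY'0 : 0 < Y' := by nlinarith
  have hP'0 : 0 < P' := by nlinarith
  have hQ'0 : 0 < Q' := by nlinarith
  have hR1 : 1 ≤ max (P / Q) (Q / P) := by
    rcases le_total P Q with hc | hc
    · exact le_trans ((one_le_div hP0).mpr hc) (le_max_right _ _)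
    · exact le_trans ((one_le_div hQ0).mpr hc) (le_max_left _ _)
  rcases max_choice (P' / Q') (Q' / P') with hm | hm <;> rw [hm] at h
  · have hi := inner_bound ε w X Y X' Y' P Q P' Q' hε hε1 hw hY hP hQ
      (by linarith) hY'u hP'u hQ'l hX'0.le hY'0 hQ'0 hP'0.le h
    have hPQ : P / Q ≤ max (P / Q) (Q / P) := le_max_left _ _
    nlinarith
  · have hi := inner_bound ε w X Y X' Y' Q P Q' P' hε hε1 hw hY hQ hP
      (by linarith) hY'u hQ'u hP'l hX'0.le hY'0 hP'0 hQ'0.le h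
    have hPQ : Q / P ≤ max (P / Q) (Q / P) := le_max_right _ _
    nlinarith

theorem approximation_preservation (n m : ℕ) (a : Fin n → ℝ) (ha : ∀ i, 0 < a i)
    (ε : ℝ) (hε : 0 < ε) (hε1 : ε < 1)
    (S₁Opt S₂Opt S₁ S₂ : Finset (Fin n))
    (h1o : S₁Opt.Nonempty) (h2o : S₂Opt.Nonempty)
    (h1 : S₁.Nonempty) (h2 : S₂.Nonempty)
    (w δ : ℝ) (hw : 0 < w)
    (hwo1 : w ≤ ∑ i ∈ S₁Opt, a i) (hwo2 : w ≤ ∑ i ∈ S₂Opt, a i)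
    (hw1 : w ≤ ∑ i ∈ S₁, a i) (hw2 : w ≤ ∑ i ∈ S₂, a i)
    (hm1 : S₁Opt.card ≤ m) (hm2 : S₂Opt.card ≤ m)
    (hm3 : S₁.card ≤ m) (hm4 : S₂.card ≤ m) (hmn : m ≤ n)
    (hδ : δ = ε * w / (3 * m))
    (h1' : 1 ≤ MR2 (fun i => (⌊a i / δ⌋ : ℝ)) S₁ S₂)
    (h2' : MR2 (fun i => (⌊a i / δ⌋ : ℝ)) S₁ S₂ ≤
      MR2 (fun i => (⌊a i / δ⌋ : ℝ)) S₁Opt S₂Opt) :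
    1 ≤ MR2 a S₁ S₂ ∧ MR2 a S₁ S₂ ≤ (1 + ε) * MR2 a S₁Opt S₂Opt := by
  have hm0 : 0 < m := lt_of_lt_of_le (Finset.card_pos.mpr h1) hm3
  have hmR : (0 : ℝ) < m := by exact_mod_cast hm0
  have hδ0 : 0 < δ := by rw [hδ]; positivity
  have hmδ : (m : ℝ) * δ = ε * w / 3 := by
    rw [hδ]; field_simp
  set X := ∑ i ∈ S₁, a i with hXdef
  set Y := ∑ i ∈ S₂, a i with hYdef
  set P := ∑ i ∈ S₁Opt, a i with hPdef
  set Q := ∑ i ∈ S₂Opt, a i with hQdef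
  set X' := δ * ∑ i ∈ S₁, (⌊a i / δ⌋ : ℝ) with hX'def
  set Y' := δ * ∑ i ∈ S₂, (⌊a i / δ⌋ : ℝ) with hY'def
  set P' := δ * ∑ i ∈ S₁Opt, (⌊a i / δ⌋ : ℝ) with hP'def
  set Q' := δ * ∑ i ∈ S₂Opt, (⌊a i / δ⌋ : ℝ) with hQ'def
  have cardb : ∀ T : Finset (Fin n), T.card ≤ m →
      (∑ i ∈ T, a i) - ε * w / 3 ≤ δ * ∑ i ∈ T, (⌊a i / δ⌋ : ℝ) ∧
      δ * ∑ i ∈ T, (⌊a i / δ⌋ : ℝ) ≤ ∑ i ∈ T, a i := by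
    intro T hT
    obtain ⟨hl, hu⟩ := sum_floor_bounds a δ hδ0 T
    refine ⟨?_, hu⟩
    have : (T.card : ℝ) * δ ≤ (m : ℝ) * δ := by
      apply mul_le_mul_of_nonneg_right _ hδ0.le
      exact_mod_cast hT
    linarith [hmδ ▸ this]
  obtain ⟨hXl, hXu⟩ := cardb S₁ hm3
  obtain ⟨hYl, hYu⟩ := cardb S₂ hm4
  obtain ⟨hPl, hPu⟩ := cardb S₁Opt hm1
  obtain ⟨hQl, hQu⟩ := cardb S₂Opt hm2
  have hX0 : 0 < X := lt_of_lt_of_le hw hw1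
  have hY0 : 0 < Y := lt_of_lt_of_le hw hw2
  -- rewrite MR2 of floors as ratios of X', Y', etc.
  have hratio : ∀ T₁ T₂ : Finset (Fin n),
      MR2 (fun i => (⌊a i / δ⌋ : ℝ)) T₁ T₂ =
      max ((δ * ∑ i ∈ T₁, (⌊a i / δ⌋ : ℝ)) / (δ * ∑ i ∈ T₂, (⌊a i / δ⌋ : ℝ)))
        ((δ * ∑ i ∈ T₂, (⌊a i / δ⌋ : ℝ)) / (δ * ∑ i ∈ T₁, (⌊a i / δ⌋ : ℝ))) := by
    intro T₁ T₂
    unfold MR2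
    rw [mul_div_mul_left _ _ hδ0.ne', mul_div_mul_left _ _ hδ0.ne']
  rw [hratio, hratio] at h2'
  have hXY' : X' / Y' ≤ max (P' / Q') (Q' / P') :=
    le_trans (le_max_left _ _) h2'
  have hYX' : Y' / X' ≤ max (P' / Q') (Q' / P') :=
    le_trans (le_max_right _ _) h2'
  constructor
  · unfold MR2
    rcases le_total X Y with hc | hc
    · exact le_trans ((one_le_div hX0).mpr hc) (le_max_right _ _)
    · exact le_trans ((one_le_div hY0).mpr hc) (le_max_left _ _)
  · show max (X / Y) (Y / X) ≤ (1 + ε) * max (P / Q) (Q / P)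
    apply max_le
    · exact key_lemma ε w X Y X' Y' P Q P' Q' hε hε1 hw hw1 hw2 hwo1 hwo2
        hXl hXu hYl hYu hPl hPu hQl hQu hXY'
    · exact key_lemma ε w Y X Y' X' P Q P' Q' hε hε1 hw hw2 hw1 hwo1 hwo2
        hYl hYu hXl hXu hPl hPu hQl hQu hYX'
end

section
/- Bounded difference lemma: let Q > 0 and suppose (S'_1, S'_2) is a pair of nonempty disjoint index sets over positive integer weights a_i such that ∑_{i∈S'_1} a_i ≤ Q, every element a_j with j ∈ S'_2 satisfies a_j ≤ Q, and MR(S'_1, S'_2, A) ≥ 1 is optimal in the sense that removing any element m_0 from S'_2 with the remaining sum still exceeding Q would yield 1 ≤ MR(S'_1, S'_2 \ {m_0}, A) ≤ MR(S'_1, S'_2, A). Then ∑_{j∈S'_2} a_j ≤ 2Q; consequently for any S_1 ⊆ S'_1 and S_2 ⊆ S'_2, −2Q ≤ ∑_{i∈S_1} a_i − ∑_{j∈S_2} a_j ≤ Q. -/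
/-- Max ratio of two subset sums of integer weights, as a real number. -/
noncomputable def MRZ (a : ℕ → ℤ) (T₁ T₂ : Finset ℕ) : ℝ :=
  max (((∑ i ∈ T₁, a i : ℤ) : ℝ) / ((∑ j ∈ T₂, a j : ℤ) : ℝ))
      (((∑ j ∈ T₂, a j : ℤ) : ℝ) / ((∑ i ∈ T₁, a i : ℤ) : ℝ))

theorem bounded_difference (a : ℕ → ℤ) (ha : ∀ i, 0 < a i) (Q : ℤ) (hQ : 0 < Q)
    (S₁' S₂' : Finset ℕ) (h1 : S₁'.Nonempty) (h2 : S₂'.Nonempty)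
    (hdisj : Disjoint S₁' S₂')
    (hsum1 : ∑ i ∈ S₁', a i ≤ Q)
    (hbound : ∀ j ∈ S₂', a j ≤ Q)
    (hge1 : 1 ≤ MRZ a S₁' S₂')
    (hopt : ∀ m₀ ∈ S₂', Q < ∑ j ∈ S₂'.erase m₀, a j →
      ¬ (1 ≤ MRZ a S₁' (S₂'.erase m₀) ∧ MRZ a S₁' (S₂'.erase m₀) ≤ MRZ a S₁' S₂')) :
    (∑ j ∈ S₂', a j ≤ 2 * Q) ∧
      ∀ S₁ ⊆ S₁', ∀ S₂ ⊆ S₂',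
        -2 * Q ≤ (∑ i ∈ S₁, a i) - (∑ j ∈ S₂, a j) ∧
          (∑ i ∈ S₁, a i) - (∑ j ∈ S₂, a j) ≤ Q := by
  have hApos : 0 < ∑ i ∈ S₁', a i := Finset.sum_pos (fun i _ => ha i) h1
  have hmain : ∑ j ∈ S₂', a j ≤ 2 * Q := by
    by_contra hc
    push_neg at hc
    obtain ⟨m₀, hm₀⟩ := h2
    have herase : ∑ j ∈ S₂'.erase m₀, a j = (∑ j ∈ S₂', a j) - a m₀ :=
      Finset.sum_erase_eq_sub hm₀
    have hQlt : Q < ∑ j ∈ S₂'.erase m₀, a j := by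
      have := hbound m₀ hm₀
      omega
    have hAleB' : ∑ i ∈ S₁', a i ≤ ∑ j ∈ S₂'.erase m₀, a j :=
      le_of_lt (lt_of_le_of_lt hsum1 hQlt)
    have hB'leB : ∑ j ∈ S₂'.erase m₀, a j ≤ ∑ j ∈ S₂', a j := by
      have := ha m₀; omega
    -- real versions
    have hAr : (0:ℝ) < ((∑ i ∈ S₁', a i : ℤ) : ℝ) := by exact_mod_cast hApos
    have hAB' : ((∑ i ∈ S₁', a i : ℤ) : ℝ) ≤ ((∑ j ∈ S₂'.erase m₀, a j : ℤ) : ℝ) := by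
      exact_mod_cast hAleB'
    have hB'B : ((∑ j ∈ S₂'.erase m₀, a j : ℤ) : ℝ) ≤ ((∑ j ∈ S₂', a j : ℤ) : ℝ) := by
      exact_mod_cast hB'leB
    have hB'pos : (0:ℝ) < ((∑ j ∈ S₂'.erase m₀, a j : ℤ) : ℝ) := lt_of_lt_of_le hAr hAB'
    apply hopt m₀ hm₀ hQlt
    unfold MRZ
    constructor
    · exact le_trans ((one_le_div hAr).2 hAB') (le_max_right _ _)
    · have h1' := le_trans ((div_le_one hB'pos).2 hAB') ((one_le_div hAr).2 (le_trans hAB' hB'B))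
      have h2' : ((∑ j ∈ S₂'.erase m₀, a j : ℤ) : ℝ) / ((∑ i ∈ S₁', a i : ℤ) : ℝ)
          ≤ ((∑ j ∈ S₂', a j : ℤ) : ℝ) / ((∑ i ∈ S₁', a i : ℤ) : ℝ) := by gcongr
      exact le_trans (max_le h1' h2') (le_max_right _ _)
  refine ⟨hmain, fun S₁ hS₁ S₂ hS₂ => ?_⟩
  have hs1 : ∑ i ∈ S₁, a i ≤ ∑ i ∈ S₁', a i :=
    Finset.sum_le_sum_of_subset_of_nonneg hS₁ (fun i _ _ => le_of_lt (ha i))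
  have hs1' : 0 ≤ ∑ i ∈ S₁, a i := Finset.sum_nonneg (fun i _ => le_of_lt (ha i))
  have hs2 : ∑ j ∈ S₂, a j ≤ ∑ j ∈ S₂', a j :=
    Finset.sum_le_sum_of_subset_of_nonneg hS₂ (fun i _ _ => le_of_lt (ha i))
  have hs2' : 0 ≤ ∑ j ∈ S₂, a j := Finset.sum_nonneg (fun i _ => le_of_lt (ha i))
  omega
end

section
/- Equal-difference comparison: let (S_1,S_2) and (S*_1,S*_2) be two pairs of nonempty disjoint index sets over positive weights a_i such that ∑_{i∈S_1} a_i − ∑_{i∈S_2} a_i = ∑_{i∈S*_1} a_i − ∑_{i∈S*_2} a_i and ∑_{i∈S_1} a_i + ∑_{i∈S_2} a_i ≥ ∑_{i∈S*_1} a_i + ∑_{i∈S*_2} a_i. Then MR(S_1,S_2,A) ≤ MR(S*_1,S*_2,A), where MR is the maximum of the two subset-sum ratios. -/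
lemma key_ratio (x y u v : ℝ) (hx : 0 < x) (hy : 0 < y) (hu : 0 < u) (hv : 0 < v)
    (hd : x - y = u - v) (hs : u + v ≤ x + y) :
    max (x / y) (y / x) ≤ max (u / v) (v / u) := by
  rcases le_total y x with h | h
  · have hvu : v ≤ u := by linarith
    have hvy : v ≤ y := by linarith
    have h1 : x / y ≤ u / v := by
      rw [div_le_div_iff₀ hy hv]; nlinarith
    have h2 : y / x ≤ u / v := by
      rw [div_le_div_iff₀ hx hv]; nlinarith
    exact max_le (h1.trans (le_max_left _ _)) (h2.trans (le_max_left _ _))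
  · have huv : u ≤ v := by linarith
    have hux : u ≤ x := by linarith
    have h1 : y / x ≤ v / u := by
      rw [div_le_div_iff₀ hx hu]; nlinarith
    have h2 : x / y ≤ v / u := by
      rw [div_le_div_iff₀ hy hu]; nlinarith
    exact max_le (h2.trans (le_max_right _ _)) (h1.trans (le_max_right _ _))

theorem equal_difference_comparison (n : ℕ) (a : Fin n → ℝ) (ha : ∀ i, 0 < a i)
    (S₁ S₂ S₁s S₂s : Finset (Fin n))
    (h1 : S₁.Nonempty) (h2 : S₂.Nonempty) (h1s : S₁s.Nonempty) (h2s : S₂s.Nonempty)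
    (hd1 : Disjoint S₁ S₂) (hd2 : Disjoint S₁s S₂s)
    (hdiff : (∑ i ∈ S₁, a i) - (∑ i ∈ S₂, a i)
        = (∑ i ∈ S₁s, a i) - (∑ i ∈ S₂s, a i))
    (hsum : (∑ i ∈ S₁s, a i) + (∑ i ∈ S₂s, a i)
        ≤ (∑ i ∈ S₁, a i) + (∑ i ∈ S₂, a i)) :
    max ((∑ i ∈ S₁, a i) / (∑ j ∈ S₂, a j)) ((∑ j ∈ S₂, a j) / (∑ i ∈ S₁, a i)) ≤
      max ((∑ i ∈ S₁s, a i) / (∑ j ∈ S₂s, a j))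
          ((∑ j ∈ S₂s, a j) / (∑ i ∈ S₁s, a i)) := by
  exact key_ratio _ _ _ _
    (Finset.sum_pos (fun i _ => ha i) h1) (Finset.sum_pos (fun i _ => ha i) h2)
    (Finset.sum_pos (fun i _ => ha i) h1s) (Finset.sum_pos (fun i _ => ha i) h2s)
    hdiff hsum
end
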